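/- Let P be a monic hyperbolic real polynomial of degree n and let 2 ≤ k ≤ n−1. Suppose c ∈ ℝ is a root of P of multiplicity m with 1 ≤ m < k, and suppose P^{(k)}(c) = 0. Then c is a simple root of P^{(k)}, i.e. P^{(k+1)}(c) ≠ 0. -/

import Mathlib

open Polynomial

private lemma aux_le (c : ℝ) (s : Multiset ℝ)
    (h : eval c (s.map fun a => X - C a).prod ≠ 0) :
    eval c (derivative (derivative (s.map fun a => X - C a).prod)) *
      eval c (s.map fun a => X - C a).prod
      ≤ eval c (derivative (s.map fun a => X - C a).prod) ^ 2 := by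
  induction s using Multiset.induction with
  | empty => simp
  | cons a s ih =>
    rw [Multiset.map_cons, Multiset.prod_cons] at h ⊢
    set R := (s.map fun a => X - C a).prod with hR
    rw [eval_mul] at h
    obtain ⟨h1, h2⟩ := mul_ne_zero_iff.mp h
    have hD : derivative ((X - C a) * R) = R + (X - C a) * derivative R := by
      simp [derivative_mul]
    have hDD : derivative (derivative ((X - C a) * R)) =
        2 * derivative R + (X - C a) * derivative (derivative R) := by
      rw [hD]; simp [derivative_mul]; ring
    rw [hDD, hD]
    simp only [eval_add, eval_mul, eval_sub, eval_X, eval_C, eval_ofNat]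
    have ih' := ih h2
    nlinarith [sq_nonneg (c - a), sq_nonneg (eval c R),
      sq_nonneg ((c - a) * eval c (derivative R)), ih']

private lemma aux_lt (c : ℝ) (s : Multiset ℝ) (hs : s ≠ 0)
    (h : eval c (s.map fun a => X - C a).prod ≠ 0) :
    eval c (derivative (derivative (s.map fun a => X - C a).prod)) *
      eval c (s.map fun a => X - C a).prod
      < eval c (derivative (s.map fun a => X - C a).prod) ^ 2 := by
  obtain ⟨a, ha⟩ := Multiset.exists_mem_of_ne_zero hs
  obtain ⟨t, rfl⟩ := Multiset.exists_cons_of_mem ha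
  rw [Multiset.map_cons, Multiset.prod_cons] at h ⊢
  set R := (t.map fun a => X - C a).prod with hR
  rw [eval_mul] at h
  obtain ⟨h1, h2⟩ := mul_ne_zero_iff.mp h
  have hD : derivative ((X - C a) * R) = R + (X - C a) * derivative R := by
    simp [derivative_mul]
  have hDD : derivative (derivative ((X - C a) * R)) =
      2 * derivative R + (X - C a) * derivative (derivative R) := by
    rw [hD]; simp [derivative_mul]; ring
  rw [hDD, hD]
  simp only [eval_add, eval_mul, eval_sub, eval_X, eval_C, eval_ofNat]
  have ih := aux_le c t h2
  have hr : 0 < eval c R ^ 2 := by positivity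
  nlinarith [sq_nonneg (c - a), sq_nonneg ((c - a) * eval c (derivative R))]

/-- Key inequality: for a hyperbolic polynomial `Q` of degree ≥ 1 and a point `c`
which is not a root of `Q`, we have `Q''(c)·Q(c) < Q'(c)²`. -/
private lemma key (Q : Polynomial ℝ) (hQ0 : Q ≠ 0)
    (hcard : Q.roots.card = Q.natDegree) (hdeg : 1 ≤ Q.natDegree)
    (c : ℝ) (hc : Q.eval c ≠ 0) :
    eval c (derivative (derivative Q)) * eval c Q < (eval c (derivative Q))^2 := by
  have hl : Q.leadingCoeff ≠ 0 := leadingCoeff_ne_zero.mpr hQ0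
  have hQ := C_leadingCoeff_mul_prod_multiset_X_sub_C hcard
  set R := (Q.roots.map fun a => X - C a).prod with hRdef
  have hroots_ne : Q.roots ≠ 0 := by
    intro h0
    rw [h0] at hcard
    simp at hcard
    omega
  have hRc : eval c R ≠ 0 := by
    intro h0
    apply hc
    rw [← hQ, eval_mul, h0, mul_zero]
  have h1 : derivative Q = C Q.leadingCoeff * derivative R := by
    conv_lhs => rw [← hQ]
    rw [derivative_C_mul]
  have h2 : derivative (derivative Q) = C Q.leadingCoeff * derivative (derivative R) := by
    rw [h1, derivative_C_mul]
  have hlt : eval c (derivative (derivative R)) * eval c R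
      < eval c (derivative R) ^ 2 := aux_lt c Q.roots hroots_ne hRc
  have hQc : eval c Q = Q.leadingCoeff * eval c R := by
    conv_lhs => rw [← hQ]
    simp [eval_mul]
  rw [h2, h1, hQc]
  simp only [eval_mul, eval_C]
  have hl2 : 0 < Q.leadingCoeff ^ 2 := by positivity
  nlinarith

/-- If `P` is a monic hyperbolic real polynomial of degree `n`, `2 ≤ k ≤ n - 1`,
and `c` is a root of `P` of multiplicity `m` with `1 ≤ m < k` which is also a root
of `P^{(k)}`, then `c` is a simple root of `P^{(k)}`, i.e. `P^{(k+1)}(c) ≠ 0`. -/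
theorem low_multiplicity_common_root_is_simple_root_of_derivative
    (n k m : ℕ) (hk : 2 ≤ k) (hk' : k ≤ n - 1)
    (P : Polynomial ℝ) (hmonic : P.Monic) (hdeg : P.natDegree = n)
    (hroots : P.roots.card = n) (hsplit : (P.map (RingHom.id ℝ)).Splits)
    (c : ℝ) (hmult : P.rootMultiplicity c = m) (hm1 : 1 ≤ m) (hmk : m < k)
    (hck : (Polynomial.derivative^[k] P).eval c = 0) :
    (Polynomial.derivative^[k + 1] P).eval c ≠ 0 := by
  classical
  have hP0 : P ≠ 0 := hmonic.ne_zero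
  have hmn : m ≤ n := by
    have h1 : P.roots.count c = P.rootMultiplicity c := P.count_roots
    have h2 := Multiset.count_le_card c P.roots
    rw [h1, hmult, hroots] at h2
    exact h2
  have hkn : k + 1 ≤ n := by omega
  -- All iterated derivatives up to order n are hyperbolic
  have hyp : ∀ j : ℕ, j ≤ n → (Polynomial.derivative^[j] P).natDegree = n - j ∧
      (Polynomial.derivative^[j] P).roots.card = n - j := by
    intro j
    induction j with
    | zero => intro _; simpa using ⟨hdeg, hroots⟩
    | succ j ih =>
      intro hj
      obtain ⟨hd, hc'⟩ := ih (by omega)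
      rw [Function.iterate_succ_apply']
      have hdle := natDegree_derivative_le (Polynomial.derivative^[j] P)
      have hcge := card_roots_le_derivative (Polynomial.derivative^[j] P)
      have hcle := (derivative (Polynomial.derivative^[j] P)).card_roots'
      omega
  have hne0 : ∀ j : ℕ, j ≤ n - 1 → Polynomial.derivative^[j] P ≠ 0 := by
    intro j hj h0
    have := (hyp j (by omega)).1
    rw [h0] at this
    simp at this
    omega
  -- root multiplicities of iterated derivatives
  have hne : ∀ j : ℕ, j ≤ m → (Polynomial.derivative^[j] P).rootMultiplicity c = m - j := by
    intro j
    induction j with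
    | zero => intro _; simpa using hmult
    | succ j ih =>
      intro hj
      have hmj := ih (by omega)
      have hroot : (Polynomial.derivative^[j] P).IsRoot c := by
        have h0 := hne0 j (by omega)
        have := (rootMultiplicity_pos h0).mp (by omega : 0 < (Polynomial.derivative^[j] P).rootMultiplicity c)
        exact this
      rw [Function.iterate_succ_apply', derivative_rootMultiplicity_of_root hroot, hmj]
      omega
  have hm0 : (Polynomial.derivative^[m] P).eval c ≠ 0 := by
    intro h0
    have h0' := hne0 m (by omega)
    have := (rootMultiplicity_pos h0').mpr h0
    rw [hne m le_rfl] at this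
    omega
  -- main induction: no two consecutive derivatives (orders between m and k+1) both vanish at c
  have main : ∀ j : ℕ, m ≤ j → j ≤ k →
      ¬((Polynomial.derivative^[j] P).eval c = 0 ∧
        (Polynomial.derivative^[j + 1] P).eval c = 0) := by
    intro j hmj
    induction j, hmj using Nat.le_induction with
    | base => intro _ h; exact hm0 h.1
    | succ j hmj ih =>
      rintro hjk ⟨h1, h2⟩
      by_cases h0 : (Polynomial.derivative^[j] P).eval c = 0
      · exact ih (by omega) ⟨h0, h1⟩
      · have hQcard := (hyp j (by omega)).2
        have hQdeg := (hyp j (by omega)).1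
        have hQ0 := hne0 j (by omega)
        have hkey := key (Polynomial.derivative^[j] P) hQ0 (by rw [hQcard, hQdeg])
          (by omega) c h0
        rw [Function.iterate_succ_apply'] at h1
        rw [Function.iterate_succ_apply', Function.iterate_succ_apply'] at h2
        rw [h1, h2] at hkey
        simp at hkey
  intro h
  exact main k (le_of_lt hmk) le_rfl ⟨hck, h⟩
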